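/- Let y_1, ..., y_n be points in the intersection B⁺ of the closed unit ball with the nonnegative orthant of R^d, and γ ∈ (0,1). If n · Vol(C△_γ) < Vol(B⁺) = 2^{-d} Vol(B), then there exists a unit vector w̃ ∈ ∂B⁺ with all coordinates strictly positive such that no y_i lies in the cap C_γ(w̃). -/

import Mathlib

open scoped ENNReal

/-- The `γ`-hyperspherical cap in direction `w`. -/
def cap (d : ℕ) (γ : ℝ) (w : EuclideanSpace ℝ (Fin d)) : Set (EuclideanSpace ℝ (Fin d)) :=
  {x | ‖x‖ ≤ 1 ∧ γ ≤ (inner ℝ x w : ℝ) / ‖w‖}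

/-- The `γ`-hyperspherical sector in direction `w` (excluding `0`). -/
def sector (d : ℕ) (γ : ℝ) (w : EuclideanSpace ℝ (Fin d)) : Set (EuclideanSpace ℝ (Fin d)) :=
  {x | ‖x‖ ≤ 1 ∧ x ≠ 0 ∧ γ ≤ (inner ℝ x w : ℝ) / (‖x‖ * ‖w‖)}

open MeasureTheory

/-- The sign-flip isometry of Euclidean space determined by a sign pattern `s`. -/
noncomputable def signFlip (d : ℕ) (s : Fin d → Bool) :
    EuclideanSpace ℝ (Fin d) ≃ₗᵢ[ℝ] EuclideanSpace ℝ (Fin d) :=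
  LinearIsometryEquiv.piLpCongrRight 2
    (fun j => if s j then LinearIsometryEquiv.refl ℝ ℝ else LinearIsometryEquiv.neg ℝ)

lemma signFlip_apply (d : ℕ) (s : Fin d → Bool) (x : EuclideanSpace ℝ (Fin d)) (j : Fin d) :
    signFlip d s x j = if s j then x j else -(x j) := by
  unfold signFlip
  by_cases h : s j <;> simp [LinearIsometryEquiv.piLpCongrRight_apply, h]

/-- The coordinate hyperplane `{x | x j = 0}` as a submodule. -/
def coordHyp (d : ℕ) (j : Fin d) : Submodule ℝ (EuclideanSpace ℝ (Fin d)) where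
  carrier := {x | x j = 0}
  add_mem' := by intro a b ha hb; simp only [Set.mem_setOf_eq] at *; simp [ha, hb]
  zero_mem' := rfl
  smul_mem' := by intro c a ha; simp only [Set.mem_setOf_eq] at *; simp [ha]

lemma volume_coordHyp (d : ℕ) (j : Fin d) :
    volume ({x | x j = 0} : Set (EuclideanSpace ℝ (Fin d))) = 0 := by
  have h : (coordHyp d j : Set (EuclideanSpace ℝ (Fin d))) ≠ Set.univ := by
    intro h
    have : EuclideanSpace.single j (1:ℝ) ∈ (coordHyp d j : Set (EuclideanSpace ℝ (Fin d))) := by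
      rw [h]; trivial
    have h2 : EuclideanSpace.single j (1:ℝ) j = 0 := this
    simp [EuclideanSpace.single_apply] at h2
  have := Measure.addHaar_submodule (volume : Measure (EuclideanSpace ℝ (Fin d)))
      (coordHyp d j) (by
        intro h; apply ‹(coordHyp d j : Set (EuclideanSpace ℝ (Fin d))) ≠ Set.univ›
        rw [h]; simp)
  exact this

/-- Existence of a lonely spherical cap in the positive orthant: if the `n` sectors
cannot cover `B⁺` (whose volume is `2^{-d}` times that of the ball), then there is a
unit direction `w̃` with strictly positive coordinates whose `γ`-cap contains no `y i`. -/
theorem exists_lonely_cap_positive_orthant (d n : ℕ) (hd : 2 ≤ d) (γ : ℝ)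
    (hγ : γ ∈ Set.Ioo (0:ℝ) 1)
    (y : Fin n → EuclideanSpace ℝ (Fin d))
    (hy : ∀ i, ‖y i‖ ≤ 1 ∧ ∀ j, 0 ≤ y i j)
    (hvol : ∀ w : EuclideanSpace ℝ (Fin d), w ≠ 0 →
      (n : ℝ≥0∞) * MeasureTheory.volume (sector d γ w) <
        MeasureTheory.volume (Metric.closedBall (0 : EuclideanSpace ℝ (Fin d)) 1) / 2 ^ d) :
    ∃ w : EuclideanSpace ℝ (Fin d), ‖w‖ = 1 ∧ (∀ j, 0 < w j) ∧
      ∀ i, y i ∉ cap d γ w := by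
  let E := EuclideanSpace ℝ (Fin d)
  set V : ℝ≥0∞ := volume (Metric.closedBall (0 : E) 1) / 2 ^ d with hV
  set P : Set E := {x | ‖x‖ ≤ 1 ∧ ∀ j, 0 ≤ x j} with hP
  set O : Set E := {x | ‖x‖ ≤ 1 ∧ ∀ j, 0 < x j} with hO
  set Bad : Set E := ⋃ i, sector d γ (y i) with hBad
  -- P is measurable
  have hPmeas : MeasurableSet P := by
    have h1 : MeasurableSet {x : E | ‖x‖ ≤ 1} :=
      (isClosed_le (continuous_norm) continuous_const).measurableSet
    have h2 : MeasurableSet {x : E | ∀ j, 0 ≤ x j} := by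
      have : {x : E | ∀ j, 0 ≤ x j} = ⋂ j, {x : E | 0 ≤ x j} := by ext x; simp
      rw [this]
      refine MeasurableSet.iInter fun j => ?_
      have : Continuous fun x : E => x j := (EuclideanSpace.proj (𝕜 := ℝ) j).continuous
      exact (isClosed_le continuous_const this).measurableSet
    exact h1.inter h2
  -- volume of P minus O is zero
  have hPO : volume P ≤ volume O := by
    have hsub : P ⊆ O ∪ ⋃ j, {x : E | x j = 0} := by
      intro x hx
      by_cases h : ∀ j, 0 < x j
      · exact Or.inl ⟨hx.1, h⟩
      · push_neg at h
        obtain ⟨j, hj⟩ := h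
        exact Or.inr (Set.mem_iUnion.2 ⟨j, le_antisymm hj (hx.2 j)⟩)
    calc volume P ≤ volume (O ∪ ⋃ j, {x : E | x j = 0}) := measure_mono hsub
      _ ≤ volume O + volume (⋃ j, {x : E | x j = 0}) := measure_union_le _ _
      _ ≤ volume O + 0 := by
          gcongr
          refine le_trans (measure_iUnion_le _) ?_
          have : ∀ j : Fin d, volume ({x : E | x j = 0}) = 0 := fun j => volume_coordHyp d j
          simp [this]
      _ = volume O := by simp
  -- ball is covered by the 2^d sign-flipped copies of P
  have hcover : Metric.closedBall (0 : E) 1 ⊆ ⋃ s : Fin d → Bool, (signFlip d s) ⁻¹' P := by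
    intro x hx
    refine Set.mem_iUnion.2 ⟨fun j => decide (0 ≤ x j), ?_⟩
    constructor
    · rw [LinearIsometryEquiv.norm_map]
      simpa [Metric.mem_closedBall, dist_eq_norm] using hx
    · intro j
      rw [signFlip_apply]
      by_cases h : 0 ≤ x j
      · simp [h]
      · have hs : decide (0 ≤ x j) = false := decide_eq_false h
        rw [hs, if_neg (by simp)]
        linarith [not_le.1 h]
  -- hence V ≤ volume P
  have hVP : V ≤ volume P := by
    have h1 : volume (Metric.closedBall (0 : E) 1) ≤ 2 ^ d * volume P := by
      calc volume (Metric.closedBall (0 : E) 1)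
          ≤ volume (⋃ s : Fin d → Bool, (signFlip d s) ⁻¹' P) := measure_mono hcover
        _ ≤ ∑' s : Fin d → Bool, volume ((signFlip d s) ⁻¹' P) := measure_iUnion_le _
        _ = ∑' _ : Fin d → Bool, volume P := by
            congr 1
            funext s
            exact (signFlip d s).measurePreserving.measure_preimage hPmeas.nullMeasurableSet
        _ = 2 ^ d * volume P := by
            rw [tsum_fintype, Finset.sum_const, Finset.card_univ, Fintype.card_fun]
            simp [nsmul_eq_mul]
    rw [hV, ENNReal.div_le_iff (by positivity) (by simp)]
    rw [mul_comm]
    exact h1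
  -- the union of sectors has volume < V
  have hBadV : volume Bad < V := by
    have hVpos : 0 < V := by
      have := hvol (EuclideanSpace.single ⟨0, by omega⟩ (1:ℝ)) (by
        intro h
        have := congrArg (fun v : E => v ⟨0, by omega⟩) h
        simp [EuclideanSpace.single_apply] at this)
      exact lt_of_le_of_lt zero_le this
    rcases Nat.eq_zero_or_pos n with hn | hn
    · subst hn
      have : Bad = ∅ := by simp [hBad]
      simpa [this] using hVpos
    · have hne : (Finset.univ : Finset (Fin n)).Nonempty := by
        simpa [Finset.univ_nonempty_iff] using Fin.pos_iff_nonempty.1 hn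
      obtain ⟨i₀, _, hi₀⟩ := Finset.exists_max_image Finset.univ
        (fun i => volume (sector d γ (y i))) hne
      calc volume Bad ≤ ∑ i : Fin n, volume (sector d γ (y i)) := by
            refine le_trans (measure_iUnion_le _) ?_
            rw [tsum_fintype]
          _ ≤ ∑ _i : Fin n, volume (sector d γ (y i₀)) := by
            exact Finset.sum_le_sum fun i _ => hi₀ i (Finset.mem_univ i)
          _ = n * volume (sector d γ (y i₀)) := by
            simp [Finset.sum_const, nsmul_eq_mul]
          _ < V := by
            by_cases h0 : y i₀ = 0
            · have hsempty : sector d γ (y i₀) = ∅ := by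
                ext x
                simp only [sector, h0, Set.mem_setOf_eq, Set.mem_empty_iff_false, iff_false]
                rintro ⟨-, -, hx⟩
                rw [inner_zero_right] at hx
                simp only [norm_zero, mul_zero, zero_div] at hx
                exact absurd (lt_of_lt_of_le hγ.1 hx) (lt_irrefl 0)
              simpa [hsempty] using hVpos
            · exact hvol (y i₀) h0
  -- find a point of O outside Bad
  have hex : ∃ w, w ∈ O ∧ w ∉ Bad := by
    by_contra h
    push_neg at h
    have : O ⊆ Bad := fun x hx => h x hx
    exact absurd (measure_mono this) (not_le.2 (lt_of_lt_of_le hBadV (le_trans hVP hPO)))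
  obtain ⟨w, hwO, hwBad⟩ := hex
  have hw0 : w ≠ 0 := by
    intro h
    have hj := hwO.2 ⟨0, by omega⟩
    rw [h] at hj
    exact lt_irrefl (0:ℝ) hj
  have hwnorm : (0:ℝ) < ‖w‖ := norm_pos_iff.2 hw0
  refine ⟨‖w‖⁻¹ • w, norm_smul_inv_norm hw0, ?_, ?_⟩
  · intro j
    have : (‖w‖⁻¹ • w) j = ‖w‖⁻¹ * w j := rfl
    rw [this]
    exact mul_pos (inv_pos.2 hwnorm) (hwO.2 j)
  · intro i hi
    obtain ⟨hyi1, hyi2⟩ := hi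
    have hnorm1 : ‖‖w‖⁻¹ • w‖ = 1 := norm_smul_inv_norm hw0
    rw [hnorm1, div_one, real_inner_smul_right] at hyi2
    -- γ ≤ ‖w‖⁻¹ * ⟨y i, w⟩
    have hinner : γ * ‖w‖ ≤ (inner ℝ (y i) w : ℝ) := by
      have := mul_le_mul_of_nonneg_right hyi2 (le_of_lt hwnorm)
      rwa [mul_comm (‖w‖⁻¹) _, mul_assoc, inv_mul_cancel₀ (ne_of_gt hwnorm), mul_one] at this
    have hip : (0:ℝ) < inner ℝ (y i) w := lt_of_lt_of_le (mul_pos hγ.1 hwnorm) hinner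
    have hyi0 : y i ≠ 0 := by
      intro h
      rw [h, inner_zero_left] at hip
      exact lt_irrefl _ hip
    have hyinorm : (0:ℝ) < ‖y i‖ := norm_pos_iff.2 hyi0
    apply hwBad
    refine Set.mem_iUnion.2 ⟨i, hwO.1, hw0, ?_⟩
    rw [real_inner_comm]
    calc γ = (γ * ‖w‖) / ‖w‖ := by field_simp
      _ ≤ (inner ℝ (y i) w : ℝ) / ‖w‖ := by gcongr
      _ ≤ (inner ℝ (y i) w : ℝ) / (‖w‖ * ‖y i‖) := by
          refine div_le_div_of_nonneg_left (le_of_lt hip) (mul_pos hwnorm hyinorm) ?_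
          calc ‖w‖ * ‖y i‖ ≤ ‖w‖ * 1 := by gcongr
            _ = ‖w‖ := mul_one _
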